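/- Let R, V, s be real numbers with R > 0, V > 0, s > 0, define γ_min = 2s + 2(s(1+s)V/R² + √(s(1+s)(1+sV/R²)(1+(1+s)V/R²))), D(γ) = (γ+2)²R² − 4(γ+1)(1+s)(R²+sV), X_±(γ) = ((γ+2)R ± √(D(γ)))/(2(1+s)), and Y_±(γ) = (γ/s)(X_±(γ)·R − R² − sV). Then for every γ > γ_min, the function γ ↦ Y_+(γ)/Y_−(γ) is differentiable at γ with derivative 2·(R/√(D(γ)))·(Y_+(γ)/Y_−(γ)). -/

import Mathlib

set_option maxHeartbeats 1000000


/-- For `R > 0`, `V > 0`, `s > 0`, with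
`D(γ) = (γ+2)²R² − 4(γ+1)(1+s)(R²+sV)`, `X_±(γ) = ((γ+2)R ± √(D(γ)))/(2(1+s))`
and `Y_±(γ) = (γ/s)(X_±(γ)R − R² − sV)`, at every `γ > γ_min` the ratio
`Y_+/Y_−` is differentiable with derivative `2·(R/√(D(γ)))·(Y_+(γ)/Y_−(γ))`. -/
theorem deriv_ratio_Yplus_Yminus (R V s γmin : ℝ)
    (hR : 0 < R) (hV : 0 < V) (hs : 0 < s)
    (hγmin : γmin = 2 * s + 2 * (s * (1 + s) * V / R ^ 2 +
      Real.sqrt (s * (1 + s) * (1 + s * V / R ^ 2) * (1 + (1 + s) * V / R ^ 2))))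
    (D Xp Xm Yp Ym : ℝ → ℝ)
    (hD : ∀ γ, D γ = (γ + 2) ^ 2 * R ^ 2 - 4 * (γ + 1) * (1 + s) * (R ^ 2 + s * V))
    (hXp : ∀ γ, Xp γ = ((γ + 2) * R + Real.sqrt (D γ)) / (2 * (1 + s)))
    (hXm : ∀ γ, Xm γ = ((γ + 2) * R - Real.sqrt (D γ)) / (2 * (1 + s)))
    (hYp : ∀ γ, Yp γ = (γ / s) * (Xp γ * R - R ^ 2 - s * V))
    (hYm : ∀ γ, Ym γ = (γ / s) * (Xm γ * R - R ^ 2 - s * V)) :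
    ∀ γ > γmin,
      HasDerivAt (fun g => Yp g / Ym g)
        (2 * (R / Real.sqrt (D γ)) * (Yp γ / Ym γ)) γ := by
  have hDf : D = fun γ => (γ + 2) ^ 2 * R ^ 2 - 4 * (γ + 1) * (1 + s) * (R ^ 2 + s * V) :=
    funext hD
  subst hDf
  have hXpf : Xp = fun γ => ((γ + 2) * R + Real.sqrt ((γ + 2) ^ 2 * R ^ 2 - 4 * (γ + 1) * (1 + s) * (R ^ 2 + s * V))) / (2 * (1 + s)) := funext hXp
  subst hXpf
  have hXmf : Xm = fun γ => ((γ + 2) * R - Real.sqrt ((γ + 2) ^ 2 * R ^ 2 - 4 * (γ + 1) * (1 + s) * (R ^ 2 + s * V))) / (2 * (1 + s)) := funext hXm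
  subst hXmf
  have hYpf : Yp = fun γ => (γ / s) * (((γ + 2) * R + Real.sqrt ((γ + 2) ^ 2 * R ^ 2 - 4 * (γ + 1) * (1 + s) * (R ^ 2 + s * V))) / (2 * (1 + s)) * R - R ^ 2 - s * V) := funext hYp
  subst hYpf
  have hYmf : Ym = fun γ => (γ / s) * (((γ + 2) * R - Real.sqrt ((γ + 2) ^ 2 * R ^ 2 - 4 * (γ + 1) * (1 + s) * (R ^ 2 + s * V))) / (2 * (1 + s)) * R - R ^ 2 - s * V) := funext hYm
  subst hYmf
  intro γ hγ
  have h1s : (0:ℝ) < 1 + s := by linarith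
  have hR2 : (0:ℝ) < R ^ 2 := by positivity
  set M : ℝ := s * (R ^ 2 + (1 + s) * V) with hM
  have hMpos : 0 < M := by positivity
  -- the sqrt term in γmin
  set T : ℝ := Real.sqrt (s * (1 + s) * (1 + s * V / R ^ 2) * (1 + (1 + s) * V / R ^ 2)) with hT
  have hTnn : 0 ≤ T := Real.sqrt_nonneg _
  have hargnn : 0 ≤ s * (1 + s) * (1 + s * V / R ^ 2) * (1 + (1 + s) * V / R ^ 2) := by positivity
  have hT2 : T ^ 2 * R ^ 4 = M * (M + R ^ 2) := by
    rw [hT, Real.sq_sqrt hargnn, hM]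
    field_simp
    ring
  have hγmin' : γmin = 2 * M / R ^ 2 + 2 * T := by
    rw [hγmin, hM]
    field_simp
    ring
  have hγminnn : 0 ≤ γmin := by
    rw [hγmin']; positivity
  have hγpos : 0 < γ := lt_of_le_of_lt hγminnn hγ
  -- positivity of discriminant
  have hu : γ * R ^ 2 - 2 * M > 2 * T * R ^ 2 := by
    rw [hγmin'] at hγ
    have := (div_lt_iff₀ hR2).mp (by linarith [hγ] : 2 * M / R ^ 2 < γ - 2 * T)
    nlinarith
  have hunn : 0 ≤ 2 * T * R ^ 2 := by positivity
  have hu2 : (γ * R ^ 2 - 2 * M) ^ 2 > 4 * (M * (M + R ^ 2)) := by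
    nlinarith [hT2]
  have hDpos : 0 < (γ + 2) ^ 2 * R ^ 2 - 4 * (γ + 1) * (1 + s) * (R ^ 2 + s * V) := by
    have hDeq : ((γ + 2) ^ 2 * R ^ 2 - 4 * (γ + 1) * (1 + s) * (R ^ 2 + s * V)) * R ^ 2
        = (γ * R ^ 2 - 2 * M) ^ 2 - 4 * (M * (M + R ^ 2)) := by
      rw [hM]; ring
    nlinarith [hDeq, hu2]
  set sd : ℝ := Real.sqrt ((γ + 2) ^ 2 * R ^ 2 - 4 * (γ + 1) * (1 + s) * (R ^ 2 + s * V)) with hsd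
  have hsdpos : 0 < sd := Real.sqrt_pos.mpr hDpos
  have hsd2 : sd ^ 2 = (γ + 2) ^ 2 * R ^ 2 - 4 * (γ + 1) * (1 + s) * (R ^ 2 + s * V) :=
    Real.sq_sqrt hDpos.le
  -- numerator and denominator at γ
  set N : ℝ := ((γ + 2) * R + sd) / (2 * (1 + s)) * R - R ^ 2 - s * V with hN
  set Dn : ℝ := ((γ + 2) * R - sd) / (2 * (1 + s)) * R - R ^ 2 - s * V with hDn
  have hprod : N * Dn = s * (R ^ 2 + s * V) * (R ^ 2 + (1 + s) * V) / (1 + s) := by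
    rw [hN, hDn]
    field_simp
    linear_combination (-(R ^ 2)) * hsd2
  have hprodpos : 0 < N * Dn := by
    rw [hprod]; positivity
  have hDnne : Dn ≠ 0 := by
    intro h; rw [h, mul_zero] at hprodpos; exact lt_irrefl _ hprodpos
  have hNne : N ≠ 0 := by
    intro h; rw [h, zero_mul] at hprodpos; exact lt_irrefl _ hprodpos
  -- derivative building blocks
  set Dp : ℝ := 2 * (γ + 2) * R ^ 2 - 4 * (1 + s) * (R ^ 2 + s * V) with hDp
  have hid : HasDerivAt (fun g : ℝ => g + 2) 1 γ := (hasDerivAt_id γ).add_const 2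
  have hDder : HasDerivAt
      (fun g : ℝ => (g + 2) ^ 2 * R ^ 2 - 4 * (g + 1) * (1 + s) * (R ^ 2 + s * V)) Dp γ := by
    have h1 : HasDerivAt (fun g : ℝ => (g + 2) ^ 2 * R ^ 2) (2 * (γ + 2) * R ^ 2) γ := by
      have := (hid.pow 2).mul_const (R ^ 2)
      refine this.congr_deriv ?_
      ring
    have h2 : HasDerivAt (fun g : ℝ => 4 * (g + 1) * (1 + s) * (R ^ 2 + s * V))
        (4 * (1 + s) * (R ^ 2 + s * V)) γ := by
      have := (((hasDerivAt_id γ).add_const 1).const_mul 4).mul_const ((1 + s)) |>.mul_const (R ^ 2 + s * V)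
      refine this.congr_deriv ?_
      ring
    have := h1.sub h2
    refine this.congr_deriv ?_
    rfl
  have hsqrt : HasDerivAt
      (fun g : ℝ => Real.sqrt ((g + 2) ^ 2 * R ^ 2 - 4 * (g + 1) * (1 + s) * (R ^ 2 + s * V)))
      (Dp / (2 * sd)) γ := hDder.sqrt hDpos.ne'
  have hNder : HasDerivAt
      (fun g : ℝ => ((g + 2) * R + Real.sqrt ((g + 2) ^ 2 * R ^ 2 - 4 * (g + 1) * (1 + s) * (R ^ 2 + s * V))) / (2 * (1 + s)) * R - R ^ 2 - s * V)
      ((R + Dp / (2 * sd)) / (2 * (1 + s)) * R) γ := by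
    have := ((((hid.mul_const R).add hsqrt).div_const (2 * (1 + s))).mul_const R).sub_const (R ^ 2) |>.sub_const (s * V)
    refine this.congr_deriv ?_
    ring
  have hDnder : HasDerivAt
      (fun g : ℝ => ((g + 2) * R - Real.sqrt ((g + 2) ^ 2 * R ^ 2 - 4 * (g + 1) * (1 + s) * (R ^ 2 + s * V))) / (2 * (1 + s)) * R - R ^ 2 - s * V)
      ((R - Dp / (2 * sd)) / (2 * (1 + s)) * R) γ := by
    have := ((((hid.mul_const R).sub hsqrt).div_const (2 * (1 + s))).mul_const R).sub_const (R ^ 2) |>.sub_const (s * V)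
    refine this.congr_deriv ?_
    ring
  have hdiv := hNder.div hDnder hDnne
  -- identify the function eventually
  have hfun : (fun g : ℝ => (g / s) * (((g + 2) * R + Real.sqrt ((g + 2) ^ 2 * R ^ 2 - 4 * (g + 1) * (1 + s) * (R ^ 2 + s * V))) / (2 * (1 + s)) * R - R ^ 2 - s * V) /
      ((g / s) * (((g + 2) * R - Real.sqrt ((g + 2) ^ 2 * R ^ 2 - 4 * (g + 1) * (1 + s) * (R ^ 2 + s * V))) / (2 * (1 + s)) * R - R ^ 2 - s * V)))
      =ᶠ[nhds γ]
      (fun g : ℝ => (((g + 2) * R + Real.sqrt ((g + 2) ^ 2 * R ^ 2 - 4 * (g + 1) * (1 + s) * (R ^ 2 + s * V))) / (2 * (1 + s)) * R - R ^ 2 - s * V) /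
      (((g + 2) * R - Real.sqrt ((g + 2) ^ 2 * R ^ 2 - 4 * (g + 1) * (1 + s) * (R ^ 2 + s * V))) / (2 * (1 + s)) * R - R ^ 2 - s * V)) := by
    filter_upwards [eventually_ne_nhds hγpos.ne'] with g hg
    exact mul_div_mul_left _ _ (div_ne_zero hg hs.ne')
  have hmain := (hdiv.congr_of_eventuallyEq hfun)
  refine hmain.congr_deriv (Eq.symm ?_)
  have hYY : γ / s * N / (γ / s * Dn) = N / Dn :=
    mul_div_mul_left _ _ (div_ne_zero hγpos.ne' hs.ne')
  show 2 * (R / sd) * (γ / s * N / (γ / s * Dn)) =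
    ((R + Dp / (2 * sd)) / (2 * (1 + s)) * R * Dn -
      N * ((R - Dp / (2 * sd)) / (2 * (1 + s)) * R)) / Dn ^ 2
  rw [hYY]
  have hL : 2 * (R / sd) * (N / Dn) = (2 * R * N) / (sd * Dn) := by
    field_simp
  rw [hL, div_eq_div_iff (mul_ne_zero hsdpos.ne' hDnne) (pow_ne_zero 2 hDnne)]
  rw [hN, hDn, hDp]
  field_simp
  ring
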